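/- Fourier truncation for Lipschitz functions on the torus: for every d, M, δ > 0 there exists M₀ = M₀(d, M, δ) and coefficients c_m ∈ ℂ for m ∈ ℤ^d with ‖m‖₁ ≤ M₀, satisfying c₀ = ∫_{𝕋^d} F dμ and |c_m| = O_{M,d}(1), such that |F(x) - Σ_{‖m‖₁ ≤ M₀} c_m e(m·x)| ≤ δ for all x ∈ 𝕋^d, whenever F : 𝕋^d → ℂ has Lipschitz constant at most M. -/

import Mathlib

open Finset Complex MeasureTheory

/-- The quotient Euclidean metric on the torus `𝕋^d = ℝ^d/ℤ^d`. -/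
noncomputable def torusDist {d : ℕ} (x y : Fin d → ℝ) : ℝ :=
  ⨅ z : Fin d → ℤ, Real.sqrt (∑ i, (x i - y i - (z i : ℝ)) ^ 2)

namespace FourierTrunc
open Real BoundedContinuousFunction


variable {d : ℕ}

abbrev T (d : ℕ) := Fin d → AddCircle (1 : ℝ)

lemma torusDist_le (x y : Fin d → ℝ) (z : Fin d → ℤ) :
    torusDist x y ≤ Real.sqrt (∑ i, (x i - y i - (z i : ℝ)) ^ 2) := by
  apply ciInf_le
  exact ⟨0, by rintro r ⟨w, rfl⟩; exact Real.sqrt_nonneg _⟩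

noncomputable def mkpi (x : Fin d → ℝ) : T d := fun i => (x i : AddCircle (1:ℝ))

noncomputable def rep (t : T d) : Fin d → ℝ := fun i => (AddCircle.equivIco 1 0 (t i) : ℝ)

lemma mkpi_rep (t : T d) : mkpi (rep t) = t := by
  funext i
  exact (AddCircle.equivIco 1 0).symm_apply_apply (t i)

lemma apply_eq_of_mkpi_eq {M : ℝ} {F : (Fin d → ℝ) → ℂ}
    (hF : ∀ x y, ‖F x - F y‖ ≤ M * torusDist x y)
    {x y : Fin d → ℝ} (h : mkpi x = mkpi y) (hM : 0 < M) : F x = F y := by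
  have hz : ∀ i, ∃ z : ℤ, x i - y i = (z : ℝ) := by
    intro i
    have : (x i : AddCircle (1:ℝ)) = (y i : AddCircle (1:ℝ)) := congrFun h i
    rw [QuotientAddGroup.eq_iff_sub_mem] at this
    obtain ⟨k, hk⟩ := AddSubgroup.mem_zmultiples_iff.mp this
    exact ⟨k, by simpa using hk.symm⟩
  choose z hzz using hz
  have h0 : torusDist x y ≤ 0 := by
    have := torusDist_le x y z
    simp only [hzz, sub_self] at this
    simpa using this
  have := hF x y
  have h1 : ‖F x - F y‖ ≤ 0 := le_trans this (by nlinarith)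
  rw [sub_eq_zero.mp (norm_eq_zero.mp (le_antisymm h1 (norm_nonneg _)))]

lemma dist_coord_eq (t s : T d) (i : Fin d) :
    ∃ z : ℤ, |rep t i - rep s i - (z:ℝ)| = dist (t i) (s i) := by
  refine ⟨round (rep t i - rep s i), ?_⟩
  have h1 : dist (t i) (s i) = ‖((rep t i - rep s i : ℝ) : AddCircle (1:ℝ))‖ := by
    have ht : ((rep t i : ℝ) : AddCircle (1:ℝ)) = t i := congrFun (mkpi_rep t) i
    have hs : ((rep s i : ℝ) : AddCircle (1:ℝ)) = s i := congrFun (mkpi_rep s) i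
    rw [← ht, ← hs, dist_eq_norm]
    norm_cast
  rw [h1, AddCircle.norm_eq]
  simp

lemma torusDist_rep_le (t s : T d) :
    torusDist (rep t) (rep s) ≤ Real.sqrt d * dist t s := by
  choose z hz using dist_coord_eq t s
  refine le_trans (torusDist_le _ _ z) ?_
  have h1 : ∀ i, (rep t i - rep s i - (z i : ℝ))^2 ≤ (dist t s)^2 := by
    intro i
    rw [← _root_.sq_abs, hz i]
    have := dist_le_pi_dist t s i
    nlinarith [dist_nonneg (x := t i) (y := s i)]
  calc Real.sqrt (∑ i, (rep t i - rep s i - (z i:ℝ))^2)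
      ≤ Real.sqrt (d * (dist t s)^2) := by
        apply Real.sqrt_le_sqrt
        calc (∑ i, (rep t i - rep s i - (z i:ℝ))^2) ≤ ∑ _i : Fin d, (dist t s)^2 :=
              Finset.sum_le_sum fun i _ => h1 i
          _ = d * (dist t s)^2 := by simp [mul_comm]
    _ = Real.sqrt d * dist t s := by
        rw [Real.sqrt_mul (Nat.cast_nonneg d), Real.sqrt_sq dist_nonneg]







/-- The character `x ↦ e(m·x)` on the torus. -/
noncomputable def chi (m : Fin d → ℤ) : C(T d, ℂ) :=
  ∏ i, (fourier (m i)).comp ⟨fun t => t i, continuous_apply i⟩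

lemma chi_apply (m : Fin d → ℤ) (t : T d) : chi m t = ∏ i, fourier (m i) (t i) := by
  simp [chi, ContinuousMap.prod_apply]

lemma chi_zero : (chi 0 : C(T d, ℂ)) = 1 := by
  ext t; simp [chi_apply, fourier_zero]

lemma chi_add (m n : Fin d → ℤ) : chi (m + n) = chi m * chi n := by
  ext t
  simp only [chi_apply, ContinuousMap.mul_apply, Pi.add_apply, ← Finset.prod_mul_distrib]
  exact Finset.prod_congr rfl fun i _ => fourier_add

lemma chi_neg (m : Fin d → ℤ) : chi (-m) = star (chi m) := by
  ext t
  simp only [chi_apply, Pi.neg_apply, ContinuousMap.star_apply, chi_apply, star_prod]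
  exact Finset.prod_congr rfl fun i _ => fourier_neg

/-- The span of the characters, as a subalgebra. -/
noncomputable def chiAlg (d : ℕ) : Subalgebra ℂ C(T d, ℂ) :=
  Submodule.toSubalgebra (Submodule.span ℂ (Set.range (chi (d := d))))
    (by rw [← chi_zero]; exact Submodule.subset_span ⟨0, rfl⟩)
    (by
      intro a b ha hb
      have h : Submodule.span ℂ (Set.range (chi (d := d))) * Submodule.span ℂ (Set.range chi)
          ≤ Submodule.span ℂ (Set.range (chi (d := d))) := by
        rw [Submodule.span_mul_span]
        apply Submodule.span_le.mpr
        rintro f ⟨g, ⟨m, rfl⟩, h', ⟨n, rfl⟩, rfl⟩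
        exact Submodule.subset_span ⟨m + n, chi_add m n⟩
      exact h (Submodule.mul_mem_mul ha hb))

/-- The star subalgebra of trigonometric polynomials. -/
noncomputable def chiStarAlg (d : ℕ) : StarSubalgebra ℂ C(T d, ℂ) where
  toSubalgebra := chiAlg d
  star_mem' := by
    intro a ha
    have : a ∈ Submodule.span ℂ (Set.range (chi (d := d))) := ha
    refine Submodule.span_induction
      (p := fun f _ => star f ∈ Submodule.span ℂ (Set.range (chi (d := d)))) ?_ ?_ ?_ ?_ this
    · rintro f ⟨m, rfl⟩
      rw [← chi_neg]
      exact Submodule.subset_span ⟨-m, rfl⟩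
    · simpa using (Submodule.zero_mem _ : (0:C(T d, ℂ)) ∈ _)
    · intro f g _ _ hf hg
      rw [star_add]; exact Submodule.add_mem _ hf hg
    · intro c f _ hf
      rw [star_smul]; exact Submodule.smul_mem _ _ hf

lemma chiStarAlg_separates (d : ℕ) : (chiStarAlg d).SeparatesPoints := by
  intro x y hxy
  obtain ⟨i, hi⟩ := Function.ne_iff.mp hxy
  refine ⟨_, ⟨chi (Pi.single i 1), Submodule.subset_span ⟨Pi.single i 1, rfl⟩, rfl⟩, ?_⟩
  have hx : chi (Pi.single i 1) x = fourier 1 (x i) := by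
    rw [chi_apply]
    rw [Finset.prod_eq_single i (fun j _ hj => by simp [Pi.single_eq_of_ne hj, fourier_zero])
      (by simp)]
    simp
  have hy : chi (Pi.single i 1) y = fourier 1 (y i) := by
    rw [chi_apply]
    rw [Finset.prod_eq_single i (fun j _ hj => by simp [Pi.single_eq_of_ne hj, fourier_zero])
      (by simp)]
    simp
  simp only [hx, hy]
  intro h
  apply hi
  rw [fourier_one, fourier_one] at h
  exact AddCircle.injective_toCircle one_ne_zero (Subtype.coe_injective h)

/-- Stone-Weierstrass: every continuous function is within `ε` of a trig polynomial. -/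
lemma exists_poly_close (d : ℕ) (h : C(T d, ℂ)) {ε : ℝ} (hε : 0 < ε) :
    ∃ c : (Fin d → ℤ) →₀ ℂ, dist h (c.sum fun m a => a • chi m) < ε := by
  have htop := ContinuousMap.starSubalgebra_topologicalClosure_eq_top_of_separatesPoints
    (chiStarAlg d) (chiStarAlg_separates d)
  have hmem : h ∈ closure ((chiStarAlg d) : Set C(T d, ℂ)) := by
    have : h ∈ (chiStarAlg d).topologicalClosure := htop ▸ trivial
    exact this
  obtain ⟨P, hP, hPd⟩ := Metric.mem_closure_iff.mp hmem ε hε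
  have : P ∈ Submodule.span ℂ (Set.range (chi (d := d))) := hP
  rw [← Finsupp.range_linearCombination] at this
  obtain ⟨c, hc⟩ := this
  refine ⟨c, ?_⟩
  have : (c.sum fun m a => a • chi m) = P := by
    rw [← hc]; rfl
  rw [this]
  exact hPd


lemma chi_mkpi (m : Fin d → ℤ) (x : Fin d → ℝ) :
    chi m (mkpi x) = Complex.exp (2 * Real.pi * Complex.I * ∑ i, (m i : ℝ) * x i) := by
  rw [chi_apply]
  have h1 : ∀ i ∈ Finset.univ, fourier (m i) (mkpi x i)
      = Complex.exp (2 * (Real.pi:ℂ) * Complex.I * (((m i : ℝ):ℂ) * ((x i : ℝ):ℂ))) := by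
    intro i _
    show fourier (m i) ((x i : ℝ) : AddCircle (1:ℝ)) = _
    rw [fourier_coe_apply]
    norm_num
    ring_nf
  rw [Finset.prod_congr rfl h1, ← Complex.exp_sum]
  congr 1
  push_cast
  rw [Finset.mul_sum]








instance : IsProbabilityMeasure (volume : Measure (AddCircle (1:ℝ))) :=
  ⟨by rw [AddCircle.measure_univ]; simp⟩

lemma cm_integrable {X : Type*} [TopologicalSpace X] [CompactSpace X] [T2Space X]
    [MeasurableSpace X] [OpensMeasurableSpace X] (μ : Measure X) [IsFiniteMeasure μ]
    (g : C(X, ℂ)) : Integrable g μ := by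
  apply Continuous.integrable_of_hasCompactSupport g.continuous
  exact IsCompact.of_isClosed_subset isCompact_univ (isClosed_tsupport _) (Set.subset_univ _)

lemma integral_fourier_unit (n : ℤ) :
    ∫ x : AddCircle (1:ℝ), fourier n x = if n = 0 then 1 else 0 := by
  by_cases hn : n = 0
  · subst hn
    simp only [if_pos rfl]
    have : ∀ x : AddCircle (1:ℝ), fourier 0 x = 1 := fun x => fourier_zero
    rw [integral_congr_ae (Filter.Eventually.of_forall this)]
    simp
  · rw [if_neg hn]
    have hmp := AddCircle.measurePreserving_mk (T := 1) 0
    rw [← hmp.map_eq, integral_map hmp.measurable.aemeasurable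
      ((map_continuous (fourier n)).aestronglyMeasurable)]
    rw [zero_add]
    have : ∀ x : ℝ, fourier n (x : AddCircle (1:ℝ)) =
        Complex.exp ((2 * π * Complex.I * n) * x) := by
      intro x
      rw [fourier_coe_apply]
      norm_num
    rw [integral_congr_ae (Filter.Eventually.of_forall fun x => this x)]
    have h0 : (2 * (π:ℂ) * Complex.I * n) ≠ 0 := by
      simp [Complex.ext_iff, Real.pi_ne_zero, hn]
    rw [← intervalIntegral.integral_of_le zero_le_one,
      integral_exp_mul_complex h0]
    push_cast
    rw [mul_one, mul_zero, Complex.exp_zero]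
    have : Complex.exp (2 * (π:ℂ) * Complex.I * n) = 1 := by
      have := Complex.exp_int_mul_two_pi_mul_I n
      rw [← this]
      congr 1
      push_cast
      ring
    rw [this]
    simp

lemma integral_chi (m : Fin d → ℤ) :
    ∫ t : T d, (∏ i, fourier (m i) (t i)) = if m = 0 then 1 else 0 := by
  rw [volume_pi, integral_fintype_prod_eq_prod (f := fun i (x : AddCircle (1:ℝ)) => fourier (m i) x)]
  simp_rw [integral_fourier_unit]
  by_cases hm : m = 0
  · subst hm; simp
  · rw [if_neg hm]
    obtain ⟨i, hi⟩ := Function.ne_iff.mp hm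
    apply Finset.prod_eq_zero (Finset.mem_univ i)
    have : m i ≠ 0 := by simpa using hi
    simp [this]

lemma restrict_pi_eq :
    (volume : Measure (Fin d → ℝ)).restrict (Set.univ.pi fun _ => Set.Ioc (0:ℝ) 1) =
      Measure.pi (fun _ : Fin d => volume.restrict (Set.Ioc (0:ℝ) 1)) := by
  symm
  apply Measure.pi_eq
  intro s hs
  rw [Measure.restrict_apply (MeasurableSet.univ_pi hs), ← Set.pi_inter_distrib, volume_pi,
    Measure.pi_pi]
  exact Finset.prod_congr rfl fun i _ =>
    (Measure.restrict_apply (hs i)).symm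

lemma integral_transfer (F : (Fin d → ℝ) → ℂ) (Fb : C(T d, ℂ)) (hFb : ∀ x, Fb (mkpi x) = F x) :
    (∫ x in Set.univ.pi (fun _ : Fin d => Set.Icc (0:ℝ) 1), F x) = ∫ t : T d, Fb t := by
  have h1 : (∫ x in Set.univ.pi (fun _ : Fin d => Set.Icc (0:ℝ) 1), F x)
      = ∫ x in Set.univ.pi (fun _ : Fin d => Set.Ioc (0:ℝ) 1), F x := by
    apply setIntegral_congr_set
    have := MeasureTheory.Measure.univ_pi_Ioc_ae_eq_Icc
      (μ := fun _ : Fin d => (volume : Measure ℝ)) (f := fun _ => (0:ℝ)) (g := fun _ => (1:ℝ))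
    rw [← volume_pi] at this
    have h2 : (Set.univ.pi fun _ : Fin d => Set.Icc (0:ℝ) 1)
        = Set.Icc (fun _ => (0:ℝ)) (fun _ => (1:ℝ)) := Set.pi_univ_Icc _ _
    rw [h2]
    exact this.symm
  rw [h1]
  have hmp : MeasurePreserving (mkpi (d := d))
      (Measure.pi (fun _ : Fin d => volume.restrict (Set.Ioc (0:ℝ) 1)))
      (volume : Measure (T d)) := by
    rw [volume_pi]
    exact measurePreserving_pi _ _ fun i => by
      simpa using AddCircle.measurePreserving_mk (T := 1) 0
  rw [show (∫ x in Set.univ.pi (fun _ : Fin d => Set.Ioc (0:ℝ) 1), F x)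
      = ∫ x, F x ∂(Measure.pi (fun _ : Fin d => volume.restrict (Set.Ioc (0:ℝ) 1))) by
    rw [← restrict_pi_eq]]
  rw [← hmp.map_eq, integral_map hmp.measurable.aemeasurable
    ((map_continuous Fb).aestronglyMeasurable)]
  simp only [hFb]







lemma addCircle_dist_le_one (a b : AddCircle (1:ℝ)) : dist a b ≤ 1 := by
  obtain ⟨v, hv⟩ := QuotientAddGroup.mk_surjective (a - b)
  rw [dist_eq_norm, ← hv, AddCircle.norm_eq]
  have := abs_sub_round v
  simp only [inv_one, one_mul, mul_one]
  linarith

lemma pi_dist_le_one (t s : T d) : dist t s ≤ 1 :=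
  dist_pi_le_iff zero_le_one |>.mpr fun i => addCircle_dist_le_one _ _

lemma exists_cover (d : ℕ) (L : NNReal) (R : ℝ) {ε : ℝ} (hε : 0 < ε) :
    ∃ t : Finset C(T d, ℂ), ∀ G : C(T d, ℂ), LipschitzWith L ⇑G → (∀ x, ‖G x‖ ≤ R) →
      ∃ h ∈ t, dist G h < ε := by
  classical
  set e := ContinuousMap.isometryEquivBoundedOfCompact (T d) ℂ
  set A0 : Set ((T d) →ᵇ ℂ) :=
    {f | LipschitzWith L ⇑f ∧ ∀ x, f x ∈ Metric.closedBall (0:ℂ) R} with hA0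
  have hcomp : IsCompact (closure A0) := by
    apply arzela_ascoli (Metric.closedBall (0:ℂ) R) (isCompact_closedBall _ _) A0
      (fun f x hf => hf.2 x)
    apply Metric.equicontinuous_of_continuity_modulus (fun r => (L:ℝ) * r)
    · have : Filter.Tendsto (fun r : ℝ => (L:ℝ) * r) (nhds 0) (nhds ((L:ℝ) * 0)) :=
        (continuous_const.mul continuous_id).tendsto 0
      simpa using this
    · intro x y f
      exact (f.2.1).dist_le_mul x y
  have hKc : IsCompact (e.symm '' closure A0) :=
    hcomp.image e.symm.continuous
  obtain ⟨t, htmem, htcov⟩ := hKc.elim_nhds_subcover (fun h => Metric.ball h ε)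
    (fun h _ => Metric.ball_mem_nhds h hε)
  refine ⟨t, fun G hGlip hGbd => ?_⟩
  have hGmem : G ∈ e.symm '' closure A0 := by
    refine ⟨e G, subset_closure ?_, e.symm_apply_apply G⟩
    exact ⟨hGlip, fun x => by rw [Metric.mem_closedBall, dist_zero_right]; exact hGbd x⟩
  obtain ⟨h, hht, hball⟩ := Set.mem_iUnion₂.mp (htcov hGmem)
  exact ⟨h, hht, Metric.mem_ball.mp hball⟩


end FourierTrunc

/-- Fourier truncation for Lipschitz functions on the torus: every `F : 𝕋^d → ℂ` with
Lipschitz constant at most `M` (for the quotient metric) is uniformly within `δ` of a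
trigonometric polynomial `Σ_{‖m‖₁ ≤ M₀} c_m e(m·x)`, where `M₀` and the bound `B` on
the coefficients `c_m` (for `m ≠ 0`) depend only on `d, M, δ`, and
`c₀ = ∫_{𝕋^d} F dμ`. -/
theorem fourier_truncation (d : ℕ) (M δ : ℝ) (hM : 0 < M) (hδ : 0 < δ) :
    ∃ (M₀ : ℕ) (B : ℝ), ∀ F : (Fin d → ℝ) → ℂ,
      (∀ x y, ‖F x - F y‖ ≤ M * torusDist x y) →
      ∃ c : (Fin d → ℤ) → ℂ,
        c 0 = (∫ x in Set.univ.pi (fun _ : Fin d => Set.Icc (0 : ℝ) 1), F x) ∧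
        (∀ m, m ≠ 0 → ‖c m‖ ≤ B) ∧
        (∀ m : Fin d → ℤ, (M₀ : ℝ) < ∑ i, |(m i : ℝ)| → c m = 0) ∧
        ∀ x, ‖F x - ∑ᶠ m : Fin d → ℤ,
            c m * Complex.exp (2 * Real.pi * Complex.I * ∑ i, (m i : ℝ) * x i)‖ ≤ δ := by
  classical
  open FourierTrunc in
  obtain ⟨t, ht⟩ := exists_cover d (Real.toNNReal (M * Real.sqrt d))
    (M * Real.sqrt d) (show (0:ℝ) < δ/4 by linarith)
  choose co hco using fun h : C(FourierTrunc.T d, ℂ) =>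
    FourierTrunc.exists_poly_close d h (show (0:ℝ) < δ/4 by linarith)
  refine ⟨t.sup fun h => (co h).support.sup fun m => ∑ i, (m i).natAbs,
    ∑ h ∈ t, ∑ m ∈ (co h).support, ‖co h m‖, ?_⟩
  intro F hF
  set Md := M * Real.sqrt d with hMddef
  have hMd0 : 0 ≤ Md := mul_nonneg hM.le (Real.sqrt_nonneg _)
  have hFmk : ∀ x y, FourierTrunc.mkpi x = FourierTrunc.mkpi y → F x = F y :=
    fun x y h => FourierTrunc.apply_eq_of_mkpi_eq hF h hM
  have hFblip : ∀ a b : FourierTrunc.T d,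
      dist (F (FourierTrunc.rep a)) (F (FourierTrunc.rep b)) ≤ Md * dist a b := by
    intro a b
    rw [Complex.dist_eq]
    calc ‖_‖ ≤ M * torusDist (FourierTrunc.rep a) (FourierTrunc.rep b) := hF _ _
      _ ≤ M * (Real.sqrt d * dist a b) :=
          mul_le_mul_of_nonneg_left (FourierTrunc.torusDist_rep_le a b) hM.le
      _ = Md * dist a b := by rw [hMddef]; ring
  have hlipFb : LipschitzWith (Real.toNNReal Md) (fun a => F (FourierTrunc.rep a)) := by
    apply LipschitzWith.of_dist_le_mul
    intro a b
    rw [Real.coe_toNNReal _ hMd0]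
    exact hFblip a b
  set Fb : C(FourierTrunc.T d, ℂ) := ⟨fun a => F (FourierTrunc.rep a), hlipFb.continuous⟩
    with hFbdef
  have hFbmk : ∀ x, Fb (FourierTrunc.mkpi x) = F x :=
    fun x => hFmk _ _ (FourierTrunc.mkpi_rep _)
  set G : C(FourierTrunc.T d, ℂ) := Fb - ContinuousMap.const _ (Fb 0) with hGdef
  have hGapp : ∀ a, G a = Fb a - Fb 0 := fun a => rfl
  have hGlip : LipschitzWith (Real.toNNReal Md) ⇑G := by
    apply LipschitzWith.of_dist_le_mul
    intro a b
    rw [Real.coe_toNNReal _ hMd0]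
    have heq : dist (G a) (G b) = dist (Fb a) (Fb b) := by
      rw [hGapp, hGapp]; exact dist_sub_right _ _ _
    rw [heq]; exact hFblip a b
  have hGbd : ∀ a, ‖G a‖ ≤ Md := by
    intro a
    rw [hGapp, ← dist_eq_norm]
    calc dist (Fb a) (Fb 0) ≤ Md * dist a 0 := hFblip a 0
      _ ≤ Md * 1 := mul_le_mul_of_nonneg_left (FourierTrunc.pi_dist_le_one _ _) hMd0
      _ = Md := mul_one Md
  obtain ⟨h, hht, hGh⟩ := ht G hGlip hGbd
  set P : C(FourierTrunc.T d, ℂ) := (co h).sum (fun m a => a • FourierTrunc.chi m) with hPdef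
  have hGP : dist G P < δ/2 := by
    calc dist G P ≤ dist G h + dist h P := dist_triangle _ _ _
      _ < δ/4 + δ/4 := add_lt_add hGh (hco h)
      _ = δ/2 := by ring
  set Istmt := (∫ x in Set.univ.pi (fun _ : Fin d => Set.Icc (0 : ℝ) 1), F x) with hIdef
  refine ⟨fun m => if m = 0 then Istmt else co h m, by simp, ?_, ?_, ?_⟩
  · intro m hm
    beta_reduce
    rw [if_neg hm]
    by_cases hmem : m ∈ (co h).support
    · calc ‖co h m‖ ≤ ∑ m' ∈ (co h).support, ‖co h m'‖ :=
          Finset.single_le_sum (fun _ _ => norm_nonneg _) hmem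
        _ ≤ ∑ h' ∈ t, ∑ m' ∈ (co h').support, ‖co h' m'‖ :=
          Finset.single_le_sum (f := fun h' => ∑ m' ∈ (co h').support, ‖co h' m'‖)
            (fun _ _ => Finset.sum_nonneg fun _ _ => norm_nonneg _) hht
    · rw [Finsupp.notMem_support_iff.mp hmem]
      simp only [norm_zero]
      exact Finset.sum_nonneg fun _ _ => Finset.sum_nonneg fun _ _ => norm_nonneg _
  · intro m hm
    have hm0 : m ≠ 0 := by
      rintro rfl
      simp only [Pi.zero_apply, Int.cast_zero, abs_zero, Finset.sum_const_zero] at hm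
      exact (Nat.cast_nonneg _).not_gt hm
    beta_reduce
    rw [if_neg hm0]
    by_contra hne
    have hmem : m ∈ (co h).support := Finsupp.mem_support_iff.mpr hne
    have hle : (∑ i, (m i).natAbs)
        ≤ t.sup fun h' => (co h').support.sup fun m' => ∑ i, (m' i).natAbs :=
      le_trans (Finset.le_sup (f := fun m' => ∑ i, (m' i).natAbs) hmem)
        (Finset.le_sup (f := fun h' => (co h').support.sup fun m' => ∑ i, (m' i).natAbs) hht)
    have hcast : ((∑ i, (m i).natAbs : ℕ) : ℝ) = ∑ i, |(m i : ℝ)| := by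
      push_cast [Nat.cast_natAbs]
      ring
    have : (∑ i, |(m i : ℝ)|)
        ≤ ((t.sup fun h' => (co h').support.sup fun m' => ∑ i, (m' i).natAbs : ℕ) : ℝ) := by
      rw [← hcast]
      exact_mod_cast hle
    linarith
  · intro x
    beta_reduce
    have hFx : F x = Fb (FourierTrunc.mkpi x) := (hFbmk x).symm
    set t0 := FourierTrunc.mkpi x with ht0
    set s0 := (co h).support with hs0
    have hchiE : ∀ m : Fin d → ℤ, FourierTrunc.chi m t0
        = Complex.exp (2 * Real.pi * Complex.I * ∑ i, (m i : ℝ) * x i) :=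
      fun m => FourierTrunc.chi_mkpi m x
    have h1 : (∑ᶠ m : Fin d → ℤ, (if m = 0 then Istmt else co h m)
          * Complex.exp (2 * Real.pi * Complex.I * ∑ i, (m i : ℝ) * x i))
        = ∑ᶠ m : Fin d → ℤ, (if m = 0 then Istmt else co h m) * FourierTrunc.chi m t0 :=
      finsum_congr fun m => by rw [hchiE]
    have h2 : (∑ᶠ m : Fin d → ℤ, (if m = 0 then Istmt else co h m) * FourierTrunc.chi m t0)
        = ∑ m ∈ insert 0 s0, (if m = 0 then Istmt else co h m) * FourierTrunc.chi m t0 := by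
      apply finsum_eq_sum_of_support_subset
      intro m hm
      simp only [Function.mem_support] at hm
      by_cases h0 : m = 0
      · simp [h0]
      · have hco0 : co h m ≠ 0 := by
          intro hc; apply hm; rw [if_neg h0, hc, zero_mul]
        simp only [Finset.coe_insert, Set.mem_insert_iff]
        exact Or.inr (Finsupp.mem_support_iff.mpr hco0)
    have h3 : (∑ m ∈ insert 0 s0, (if m = 0 then Istmt else co h m) * FourierTrunc.chi m t0)
        = Istmt + ∑ m ∈ s0.erase 0, co h m * FourierTrunc.chi m t0 := by
      have hins : insert (0 : Fin d → ℤ) s0 = insert 0 (s0.erase 0) := by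
        ext m
        simp only [Finset.mem_insert, Finset.mem_erase]
        tauto
      rw [hins, Finset.sum_insert (Finset.notMem_erase _ _)]
      congr 1
      · rw [if_pos rfl, FourierTrunc.chi_zero, ContinuousMap.one_apply, mul_one]
      · exact Finset.sum_congr rfl fun m hm => by rw [if_neg (Finset.mem_erase.mp hm).1]
    have hPapp : ∀ a, P a = ∑ m ∈ s0, co h m * FourierTrunc.chi m a := by
      intro a
      rw [hPdef, Finsupp.sum, ContinuousMap.sum_apply]
      exact Finset.sum_congr rfl fun m _ => rfl
    have hPt0 : P t0 = co h 0 + ∑ m ∈ s0.erase 0, co h m * FourierTrunc.chi m t0 := by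
      rw [hPapp]
      by_cases h0 : (0 : Fin d → ℤ) ∈ s0
      · rw [← Finset.insert_erase h0, Finset.sum_insert (Finset.notMem_erase _ _),
          Finset.erase_insert_eq_erase, Finset.erase_idem]
        rw [FourierTrunc.chi_zero, ContinuousMap.one_apply, mul_one]
      · rw [Finset.erase_eq_of_notMem h0, Finsupp.notMem_support_iff.mp h0]
        simp
    have hIeq : Istmt = ∫ a : FourierTrunc.T d, Fb a :=
      FourierTrunc.integral_transfer F Fb hFbmk
    have hint : ∀ g : C(FourierTrunc.T d, ℂ), Integrable (⇑g) volume :=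
      fun g => FourierTrunc.cm_integrable volume g
    have hGint : (∫ a : FourierTrunc.T d, G a) = (∫ a : FourierTrunc.T d, Fb a) - Fb 0 := by
      have hsub : (∫ a : FourierTrunc.T d, (Fb a - Fb 0))
          = (∫ a : FourierTrunc.T d, Fb a) - ∫ _a : FourierTrunc.T d, (Fb 0 : ℂ) :=
        integral_sub (hint Fb) (integrable_const _)
      simp only [hGapp]
      rw [hsub, integral_const]
      simp [measure_univ]
    have hPint : (∫ a : FourierTrunc.T d, P a) = co h 0 := by
      have hrw : (∫ a : FourierTrunc.T d, P a)
          = ∑ m ∈ s0, co h m * ∫ a : FourierTrunc.T d, FourierTrunc.chi m a := by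
        simp only [hPapp]
        rw [integral_finset_sum _ (fun m _ => ((hint (FourierTrunc.chi m)).const_mul _))]
        exact Finset.sum_congr rfl fun m _ => integral_const_mul _ _
      rw [hrw]
      have hchiint : ∀ m : Fin d → ℤ, (∫ a : FourierTrunc.T d, FourierTrunc.chi m a)
          = if m = 0 then 1 else 0 := by
        intro m
        rw [show (fun a : FourierTrunc.T d => FourierTrunc.chi m a)
            = fun a => ∏ i, fourier (m i) (a i) from funext fun a => FourierTrunc.chi_apply m a]
        exact FourierTrunc.integral_chi m
      simp only [hchiint, mul_ite, mul_one, mul_zero]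
      rw [Finset.sum_ite_eq' s0 0 (fun m => co h m)]
      by_cases h0 : (0 : Fin d → ℤ) ∈ s0
      · rw [if_pos h0]
      · rw [if_neg h0, Finsupp.notMem_support_iff.mp h0]
    have key : F x - (Istmt + (P t0 - co h 0))
        = (G t0 - P t0) + ((∫ a : FourierTrunc.T d, P a) - ∫ a : FourierTrunc.T d, G a) := by
      rw [hPint, hFx, hIeq, hGint, hGapp]
      ring
    have hfinsum : (∑ᶠ m : Fin d → ℤ, (if m = 0 then Istmt else co h m)
          * Complex.exp (2 * Real.pi * Complex.I * ∑ i, (m i : ℝ) * x i))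
        = Istmt + (P t0 - co h 0) := by
      rw [h1, h2, h3, hPt0]
      ring
    rw [hfinsum, key]
    have hb1 : ‖G t0 - P t0‖ ≤ dist G P := by
      rw [← Complex.dist_eq]
      exact ContinuousMap.dist_apply_le_dist t0
    have hb2 : ‖(∫ a : FourierTrunc.T d, P a) - ∫ a : FourierTrunc.T d, G a‖
        ≤ dist G P := by
      rw [← integral_sub (hint P) (hint G)]
      have hle := norm_integral_le_of_norm_le_const (μ := (volume : Measure (FourierTrunc.T d)))
        (f := fun a => P a - G a) (C := dist G P)
        (Filter.Eventually.of_forall fun a => by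
          rw [← dist_eq_norm, dist_comm]
          exact le_trans (ContinuousMap.dist_apply_le_dist a) (le_of_eq (dist_comm G P ▸ rfl)))
      simpa [measure_univ] using hle
    calc ‖(G t0 - P t0)
          + ((∫ a : FourierTrunc.T d, P a) - ∫ a : FourierTrunc.T d, G a)‖
        ≤ ‖G t0 - P t0‖
          + ‖(∫ a : FourierTrunc.T d, P a) - ∫ a : FourierTrunc.T d, G a‖ :=
          norm_add_le _ _
      _ ≤ dist G P + dist G P := add_le_add hb1 hb2
      _ ≤ δ/2 + δ/2 := add_le_add hGP.le hGP.le
      _ = δ := by ring
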